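/- arXiv:1212.1481 — 3 statements merged into one kernel-verified Lean document; each statement's English description precedes it below -/
import Mathlib

section
/- Let (Ω, λ) be a probability measure space, T : Ω → Ω a measure-preserving ergodic transformation, and f : Ω → ℝ≥0 a measurable non-negative function. If the function g(ω) := f(T ω) − f(ω) is integrable (belongs to L¹(Ω, λ)), then for λ-almost every ω ∈ Ω one has lim_{n → ∞} f(Tⁿ ω)/n = 0. -/
open MeasureTheory Filter

section Aux

variable {Ω : Type*} [MeasurableSpace Ω]

/-- Recursive maximal function for Garsia's proof of the maximal ergodic theorem:
`maxS T h N ω = max_{0 ≤ n ≤ N} (birkhoffSum T h n ω)`. -/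
noncomputable def maxS (T : Ω → Ω) (h : Ω → ℝ) : ℕ → Ω → ℝ
  | 0 => fun _ => 0
  | N + 1 => fun ω => max 0 (h ω + maxS T h N (T ω))

lemma maxS_zero (T : Ω → Ω) (h : Ω → ℝ) (ω : Ω) : maxS T h 0 ω = 0 := rfl

lemma maxS_succ (T : Ω → Ω) (h : Ω → ℝ) (N : ℕ) (ω : Ω) :
    maxS T h (N + 1) ω = max 0 (h ω + maxS T h N (T ω)) := rfl

lemma maxS_nonneg (T : Ω → Ω) (h : Ω → ℝ) (N : ℕ) (ω : Ω) : 0 ≤ maxS T h N ω := by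
  cases N with
  | zero => exact le_refl 0
  | succ N => exact le_max_left _ _

lemma maxS_mono (T : Ω → Ω) (h : Ω → ℝ) : ∀ N ω, maxS T h N ω ≤ maxS T h (N + 1) ω
  | 0, ω => maxS_nonneg T h 1 ω
  | N + 1, ω => by
      rw [maxS_succ, maxS_succ]
      exact max_le_max (le_refl 0) (add_le_add_right (maxS_mono T h N (T ω)) _)

lemma maxS_mono' (T : Ω → Ω) (h : Ω → ℝ) {a b : ℕ} (hab : a ≤ b) (ω : Ω) :
    maxS T h a ω ≤ maxS T h b ω := by
  induction b with
  | zero => interval_cases a; exact le_refl _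
  | succ b ih =>
      rcases Nat.lt_or_ge a (b+1) with hlt | hge
      · exact le_trans (ih (by omega)) (maxS_mono T h b ω)
      · have : a = b + 1 := by omega
        subst this; exact le_refl _

lemma maxS_measurable {T : Ω → Ω} {h : Ω → ℝ} (hT : Measurable T) (hh : Measurable h) :
    ∀ N, Measurable (maxS T h N)
  | 0 => measurable_const
  | N + 1 => measurable_const.max (hh.add ((maxS_measurable hT hh N).comp hT))

lemma birkhoffSum_le_maxS (T : Ω → Ω) (h : Ω → ℝ) : ∀ n ω, birkhoffSum T h n ω ≤ maxS T h n ω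
  | 0, ω => by simp [maxS_zero]
  | n + 1, ω => by
      rw [birkhoffSum_succ', maxS_succ]
      exact le_trans (add_le_add_right (birkhoffSum_le_maxS T h n (T ω)) _) (le_max_right _ _)

variable {lam : Measure Ω} [IsProbabilityMeasure lam] {T : Ω → Ω}

lemma integral_comp_T (hT : MeasurePreserving T lam lam) {φ : Ω → ℝ} (hφ : Measurable φ) :
    ∫ ω, φ (T ω) ∂lam = ∫ ω, φ ω ∂lam := by
  have := integral_map (μ := lam) hT.measurable.aemeasurable
    (f := φ) hφ.aestronglyMeasurable
  rw [hT.map_eq] at this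
  exact this.symm

lemma integrable_comp_T (hT : MeasurePreserving T lam lam) {φ : Ω → ℝ} (hφ : Measurable φ)
    (hint : Integrable φ lam) : Integrable (fun ω => φ (T ω)) lam := by
  have := (hT.integrable_comp hφ.aestronglyMeasurable).mpr hint
  exact this

lemma maxS_integrable (hT : MeasurePreserving T lam lam) {h : Ω → ℝ}
    (hhm : Measurable h) (hhi : Integrable h lam) : ∀ N, Integrable (maxS T h N) lam := by
  intro N
  induction N with
  | zero => simpa [maxS] using integrable_const (0 : ℝ)
  | succ N ih =>
      have hc : Integrable (fun ω => maxS T h N (T ω)) lam :=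
        integrable_comp_T hT (maxS_measurable hT.measurable hhm N) ih
      have hsum : Integrable (fun ω => h ω + maxS T h N (T ω)) lam := hhi.add hc
      refine hsum.mono ((maxS_measurable hT.measurable hhm (N+1)).aestronglyMeasurable) ?_
      filter_upwards with ω
      rw [maxS_succ, Real.norm_eq_abs, Real.norm_eq_abs]
      rcases le_or_gt (h ω + maxS T h N (T ω)) 0 with h0 | h0
      · rw [max_eq_left h0]; simpa using abs_nonneg _
      · rw [max_eq_right h0.le]

/-- Garsia's maximal ergodic theorem, in the form we need. -/
lemma maximal_ergodic (hT : MeasurePreserving T lam lam) {h : Ω → ℝ}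
    (hhm : Measurable h) (hhi : Integrable h lam)
    (hae : ∀ᵐ ω ∂lam, ∃ n, 0 < birkhoffSum T h n ω) : 0 ≤ ∫ ω, h ω ∂lam := by
  set E : ℕ → Set Ω := fun N => {ω | 0 < h ω + maxS T h N (T ω)} with hE
  have hEm : ∀ N, MeasurableSet (E N) := fun N =>
    measurableSet_lt measurable_const
      (hhm.add ((maxS_measurable hT.measurable hhm N).comp hT.measurable))
  have hEmono : Monotone E := by
    intro a b hab ω hω
    exact lt_of_lt_of_le hω (add_le_add_right (maxS_mono' T h hab (T ω)) _)
  -- per-N maximal inequality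
  have key : ∀ N, 0 ≤ ∫ ω in E N, h ω ∂lam := by
    intro N
    set D : Ω → ℝ := fun ω => maxS T h (N+1) ω - maxS T h (N+1) (T ω) with hD
    have hMi := maxS_integrable hT hhm hhi (N+1)
    have hMc : Integrable (fun ω => maxS T h (N+1) (T ω)) lam :=
      integrable_comp_T hT (maxS_measurable hT.measurable hhm (N+1)) hMi
    have hDi : Integrable D lam := hMi.sub hMc
    have h1 : ∀ ω ∈ E N, D ω ≤ h ω := by
      intro ω hω
      have heq : maxS T h (N+1) ω = h ω + maxS T h N (T ω) := by
        rw [maxS_succ]; exact max_eq_right (le_of_lt hω)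
      have := maxS_mono T h N (T ω)
      simp only [hD, heq]; linarith
    have h2 : ∀ ω ∈ (E N)ᶜ, D ω ≤ 0 := by
      intro ω hω
      have heq : maxS T h (N+1) ω = 0 := by
        rw [maxS_succ]; exact max_eq_left (not_lt.mp hω)
      have := maxS_nonneg T h (N+1) (T ω)
      simp only [hD, heq]; linarith
    have hint0 : ∫ ω, D ω ∂lam = 0 := by
      rw [hD]
      rw [integral_sub hMi hMc,
        integral_comp_T hT (maxS_measurable hT.measurable hhm (N+1)), sub_self]
    have hsplit := integral_add_compl (hEm N) hDi
    have hcompl : ∫ ω in (E N)ᶜ, D ω ∂lam ≤ 0 := setIntegral_nonpos (hEm N).compl h2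
    have hstep : 0 ≤ ∫ ω in E N, D ω ∂lam := by
      have : ∫ ω in E N, D ω ∂lam + ∫ ω in (E N)ᶜ, D ω ∂lam = 0 := by rw [hsplit, hint0]
      linarith
    calc (0:ℝ) ≤ ∫ ω in E N, D ω ∂lam := hstep
      _ ≤ ∫ ω in E N, h ω ∂lam :=
          setIntegral_mono_on hDi.integrableOn hhi.integrableOn (hEm N) h1
  -- the union of the E N has full measure
  have hfull : ∀ᵐ ω ∂lam, ω ∈ ⋃ N, E N := by
    filter_upwards [hae] with ω hω
    obtain ⟨n, hn⟩ := hω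
    cases n with
    | zero => simp [birkhoffSum_zero] at hn
    | succ m =>
        rw [birkhoffSum_succ'] at hn
        have : 0 < h ω + maxS T h m (T ω) :=
          lt_of_lt_of_le hn (add_le_add_right (birkhoffSum_le_maxS T h m (T ω)) _)
        exact Set.mem_iUnion.mpr ⟨m, this⟩
  have hres : lam.restrict (⋃ N, E N) = lam := Measure.restrict_eq_self_of_ae_mem hfull
  have hlim : Tendsto (fun N => ∫ ω in E N, h ω ∂lam) atTop
      (nhds (∫ ω in ⋃ N, E N, h ω ∂lam)) :=
    tendsto_setIntegral_of_monotone hEm hEmono hhi.integrableOn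
  have : ∫ ω in ⋃ N, E N, h ω ∂lam = ∫ ω, h ω ∂lam := by rw [hres]
  rw [this] at hlim
  exact ge_of_tendsto' hlim key

/-- The integral of `f ∘ T - f` vanishes when `f` is nonnegative measurable and
the difference is integrable. -/
lemma integral_sub_comp_eq_zero (hT : MeasurePreserving T lam lam) {f : Ω → ℝ}
    (hfm : Measurable f) (hf0 : ∀ ω, 0 ≤ f ω)
    (hg : Integrable (fun ω => f (T ω) - f ω) lam) :
    ∫ ω, (f (T ω) - f ω) ∂lam = 0 := by
  set φ : ℕ → Ω → ℝ := fun M ω => min (f ω) M with hφ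
  have hφm : ∀ M : ℕ, Measurable (φ M) := fun M => hfm.min measurable_const
  have hφi : ∀ M : ℕ, Integrable (φ M) lam := by
    intro M
    refine ⟨(hφm M).aestronglyMeasurable, ?_⟩
    apply HasFiniteIntegral.of_bounded (C := (M:ℝ))
    filter_upwards with ω
    rw [Real.norm_eq_abs, abs_of_nonneg (le_min (hf0 ω) (Nat.cast_nonneg M))]
    exact min_le_right _ _
  have hint : ∀ M : ℕ, ∫ ω, (φ M (T ω) - φ M ω) ∂lam = 0 := by
    intro M
    have hc : Integrable (fun ω => φ M (T ω)) lam := integrable_comp_T hT (hφm M) (hφi M)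
    rw [integral_sub hc (hφi M), integral_comp_T hT (hφm M), sub_self]
  have hDCT : Tendsto (fun M : ℕ => ∫ ω, (φ M (T ω) - φ M ω) ∂lam) atTop
      (nhds (∫ ω, (f (T ω) - f ω) ∂lam)) := by
    apply tendsto_integral_of_dominated_convergence (bound := fun ω => |f (T ω) - f ω|)
    · intro M
      exact (((hφm M).comp hT.measurable).sub (hφm M)).aestronglyMeasurable
    · exact hg.abs
    · intro M
      filter_upwards with ω
      rw [Real.norm_eq_abs]
      have h := abs_min_sub_min_le_max (f (T ω)) (M:ℝ) (f ω) (M:ℝ)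
      simpa using h
    · filter_upwards with ω
      have h1 : ∀ᶠ M : ℕ in atTop, f (T ω) ≤ (M:ℝ) :=
        tendsto_natCast_atTop_atTop.eventually_ge_atTop _
      have h2 : ∀ᶠ M : ℕ in atTop, f ω ≤ (M:ℝ) :=
        tendsto_natCast_atTop_atTop.eventually_ge_atTop _
      have hev : ∀ᶠ M : ℕ in atTop, φ M (T ω) - φ M ω = f (T ω) - f ω := by
        filter_upwards [h1, h2] with M m1 m2
        simp [hφ, min_eq_left m1, min_eq_left m2]
      exact Tendsto.congr' (hev.mono fun M hM => hM.symm) tendsto_const_nhds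
  have h0 : Tendsto (fun M : ℕ => ∫ ω, (φ M (T ω) - φ M ω) ∂lam) atTop (nhds 0) := by
    simp only [hint]; exact tendsto_const_nhds
  exact (tendsto_nhds_unique hDCT h0)

end Aux

/-- If `T` is an ergodic measure-preserving transformation of a probability
space `(Ω, lam)`, `f : Ω → ℝ` is measurable and non-negative, and
`g(ω) = f(Tω) − f(ω)` is integrable, then `f(Tⁿ ω)/n → 0` for `lam`-a.e. `ω`. -/
theorem sublinear_tracking_lemma {Ω : Type*} [MeasurableSpace Ω]
    (lam : Measure Ω) [IsProbabilityMeasure lam]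
    (T : Ω → Ω) (hT : Ergodic T lam)
    (f : Ω → ℝ) (hf_meas : Measurable f) (hf_nonneg : ∀ ω, 0 ≤ f ω)
    (hg : Integrable (fun ω => f (T ω) - f ω) lam) :
    ∀ᵐ ω ∂lam, Tendsto (fun n : ℕ => f (T^[n] ω) / n) atTop (nhds 0) := by
  have hTm : Measurable T := hT.toMeasurePreserving.measurable
  set g : Ω → ℝ := fun ω => f (T ω) - f ω with hgdef
  have hgm : Measurable g := (hf_meas.comp hTm).sub hf_meas
  have hg0 : ∫ ω, g ω ∂lam = 0 :=
    integral_sub_comp_eq_zero hT.toMeasurePreserving hf_meas hf_nonneg hg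
  set D : ℕ → Ω → ℝ := fun n ω => f (T^[n] ω) - f ω with hDdef
  have hDm : ∀ n, Measurable (D n) := fun n => (hf_meas.comp (hTm.iterate n)).sub hf_meas
  have hDbs : ∀ n ω, birkhoffSum T g n ω = D n ω := by
    intro n ω
    induction n with
    | zero => simp [hDdef]
    | succ n ih =>
        rw [birkhoffSum_succ, ih]
        simp only [hDdef, hgdef, Function.iterate_succ_apply']
        ring
  have hDsucc : ∀ n ω, D (n+1) ω = g ω + D n (T ω) := by
    intro n ω
    simp only [hDdef, hgdef, Function.iterate_succ_apply]
    ring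
  set A : ℝ → Set Ω := fun c => ⋂ N : ℕ, ⋃ n : ℕ, ⋃ _ : N ≤ n, {ω | c * n < D n ω} with hAdef
  have hAmem : ∀ (c : ℝ) ω, ω ∈ A c ↔ ∀ N : ℕ, ∃ n, N ≤ n ∧ c * n < D n ω := by
    intro c ω
    simp [hAdef, Set.mem_iInter, Set.mem_iUnion]
  have hAmeas : ∀ c : ℝ, MeasurableSet (A c) := by
    intro c
    refine MeasurableSet.iInter fun N => MeasurableSet.iUnion fun n =>
      MeasurableSet.iUnion fun _ => ?_
    exact measurableSet_lt measurable_const (hDm n)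
  -- inclusion lemmas
  have incl1 : ∀ c c' : ℝ, 0 < c' → c' < c → ∀ ω, ω ∈ A c → T ω ∈ A c' := by
    intro c c' _ hlt ω hω
    rw [hAmem] at hω ⊢
    intro N
    have hpos : (0:ℝ) < c - c' := sub_pos.2 hlt
    obtain ⟨n₀, hn₀⟩ := exists_nat_ge ((g ω - c) / (c - c'))
    obtain ⟨n, hn, hlt'⟩ := hω (max (N+1) (n₀+1))
    have hn1 : n₀ + 1 ≤ n := le_trans (le_max_right _ _) hn
    have hnN : N + 1 ≤ n := le_trans (le_max_left _ _) hn
    obtain ⟨m, rfl⟩ : ∃ m, n = m + 1 := ⟨n - 1, by omega⟩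
    refine ⟨m, by omega, ?_⟩
    have hDrel : D m (T ω) = D (m+1) ω - g ω := by
      rw [hDsucc m ω]; ring
    rw [hDrel]
    have hm0 : (n₀:ℝ) ≤ (m:ℝ) := by exact_mod_cast by omega
    have hb : g ω - c ≤ (c - c') * m := by
      have h1 : g ω - c ≤ n₀ * (c - c') := by
        rw [div_le_iff₀ hpos] at hn₀; linarith
      nlinarith
    have hcast : ((m+1 : ℕ):ℝ) = (m:ℝ) + 1 := by push_cast; ring
    rw [hcast] at hlt'
    nlinarith
  have incl2 : ∀ c c' : ℝ, c' < c → ∀ ω, T ω ∈ A c → ω ∈ A c' := by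
    intro c c' hlt ω hω
    rw [hAmem] at hω ⊢
    intro N
    have hpos : (0:ℝ) < c - c' := sub_pos.2 hlt
    obtain ⟨n₀, hn₀⟩ := exists_nat_ge ((c' - g ω) / (c - c'))
    obtain ⟨n, hn, hlt'⟩ := hω (max N n₀)
    refine ⟨n + 1, by omega, ?_⟩
    · have h1 : N ≤ n := le_trans (le_max_left _ _) hn
      have h2 : (n₀:ℝ) ≤ (n:ℝ) := by exact_mod_cast le_trans (le_max_right _ _) hn
      have hb : c' - g ω ≤ (c - c') * n := by
        have := (div_le_iff₀ hpos).mp hn₀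
        nlinarith
      rw [hDsucc n ω]
      have hcast : ((n+1 : ℕ):ℝ) = (n:ℝ) + 1 := by push_cast; ring
      rw [hcast]
      nlinarith
  -- the invariant sets
  set C : ℕ → Set Ω := fun k => ⋃ q : ℚ, ⋃ _ : 1/((k:ℚ)+1) < q, A (q:ℝ) with hCdef
  have hCmem : ∀ (k : ℕ) ω, ω ∈ C k ↔ ∃ q : ℚ, 1/((k:ℚ)+1) < q ∧ ω ∈ A (q:ℝ) := by
    intro k ω
    simp [hCdef, Set.mem_iUnion]
  have hCmeas : ∀ k, MeasurableSet (C k) :=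
    fun k => MeasurableSet.iUnion fun q => MeasurableSet.iUnion fun _ => hAmeas _
  have hek : ∀ k : ℕ, (0:ℚ) < 1/((k:ℚ)+1) := by
    intro k; positivity
  have hCinv : ∀ k, T ⁻¹' (C k) = C k := by
    intro k
    apply Set.Subset.antisymm
    · intro ω hω
      rw [Set.mem_preimage, hCmem] at hω
      obtain ⟨q, hq, hA⟩ := hω
      set e : ℚ := 1/((k:ℚ)+1) with he
      refine (hCmem k ω).mpr ⟨(e + q)/2, by rw [← he]; linarith, ?_⟩
      refine incl2 (q:ℝ) (((e + q)/2 : ℚ):ℝ) ?_ ω hA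
      push_cast
      have : (e:ℝ) < (q:ℝ) := by exact_mod_cast hq
      linarith
    · intro ω hω
      rw [hCmem] at hω
      obtain ⟨q, hq, hA⟩ := hω
      set e : ℚ := 1/((k:ℚ)+1) with he
      rw [Set.mem_preimage, hCmem]
      refine ⟨(e + q)/2, by rw [← he]; linarith, ?_⟩
      have he0 : (0:ℝ) < (((e + q)/2 : ℚ):ℝ) := by
        have h1 : (0:ℚ) < (e + q)/2 := by have := hek k; rw [← he] at this; linarith
        exact_mod_cast h1
      refine incl1 (q:ℝ) (((e + q)/2 : ℚ):ℝ) he0 ?_ ω hA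
      push_cast
      have : (e:ℝ) < (q:ℝ) := by exact_mod_cast hq
      linarith
  -- each C k is null
  have hCzero : ∀ k, lam (C k) = 0 := by
    intro k
    rcases hT.toPreErgodic.prob_eq_zero_or_one (hCmeas k) (hCinv k) with h0 | h1
    · exact h0
    · exfalso
      set ε : ℝ := ((1/((k:ℚ)+1) : ℚ) : ℝ) with hε
      have hε0 : 0 < ε := by rw [hε]; exact_mod_cast hek k
      set h : Ω → ℝ := fun ω => g ω - ε with hhdef
      have hhm : Measurable h := hgm.sub measurable_const
      have hhi : Integrable h lam := hg.sub (integrable_const ε)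
      have hbs : ∀ n ω, birkhoffSum T h n ω = D n ω - n * ε := by
        intro n ω
        have : birkhoffSum T h n ω = birkhoffSum T g n ω - n * ε := by
          simp [birkhoffSum, hhdef, Finset.sum_sub_distrib, mul_comm]
        rw [this, hDbs]
      have haeC : ∀ᵐ ω ∂lam, ω ∈ C k := by
        have hcz : lam ((C k)ᶜ) = 0 := by
          rw [measure_compl (hCmeas k) (measure_ne_top _ _), h1, measure_univ, tsub_self]
        have := measure_eq_zero_iff_ae_notMem.mp hcz
        filter_upwards [this] with ω hω
        simpa using hω
      have hae : ∀ᵐ ω ∂lam, ∃ n, 0 < birkhoffSum T h n ω := by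
        filter_upwards [haeC] with ω hω
        obtain ⟨q, hq, hA⟩ := (hCmem k ω).mp hω
        obtain ⟨n, hn1, hlt'⟩ := (hAmem (q:ℝ) ω).mp hA 1
        refine ⟨n, ?_⟩
        rw [hbs]
        have hqε : ε ≤ (q:ℝ) := by
          rw [hε]; exact_mod_cast hq.le
        have hn0 : (0:ℝ) ≤ (n:ℝ) := Nat.cast_nonneg n
        nlinarith
      have h0 := maximal_ergodic hT.toMeasurePreserving hhm hhi hae
      have hint : ∫ ω, h ω ∂lam = -ε := by
        rw [hhdef]
        rw [integral_sub hg (integrable_const ε), hg0, integral_const]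
        simp
      rw [hint] at h0
      linarith
  -- conclusion
  have hfull : ∀ᵐ ω ∂lam, ∀ k : ℕ, ω ∉ C k := by
    rw [ae_all_iff]
    intro k
    exact measure_eq_zero_iff_ae_notMem.mp (hCzero k)
  filter_upwards [hfull] with ω hω
  rw [tendsto_order]
  constructor
  · intro a ha
    filter_upwards with n
    exact lt_of_lt_of_le ha (div_nonneg (hf_nonneg _) (Nat.cast_nonneg n))
  · intro a ha
    obtain ⟨q, hq0, hqa⟩ : ∃ q : ℚ, (0:ℝ) < (q:ℝ) ∧ (q:ℝ) < a/2 := by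
      obtain ⟨q, h1, h2⟩ := exists_rat_btwn (half_pos ha)
      exact ⟨q, h1, h2⟩
    obtain ⟨k, hk⟩ : ∃ k : ℕ, 1/((k:ℚ)+1) < q := by
      have hq0' : (0:ℚ) < q := by exact_mod_cast hq0
      obtain ⟨k, hk⟩ := exists_nat_one_div_lt hq0'
      exact ⟨k, hk⟩
    have hnA : ω ∉ A (q:ℝ) := by
      intro hmem
      exact hω k ((hCmem k ω).mpr ⟨q, hk, hmem⟩)
    rw [hAmem] at hnA
    push_neg at hnA
    obtain ⟨N, hN⟩ := hnA
    have hdiv : Tendsto (fun n : ℕ => f ω / n) atTop (nhds 0) :=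
      tendsto_const_div_atTop_nhds_zero_nat (f ω)
    have h2 : ∀ᶠ n : ℕ in atTop, f ω / n < a/2 :=
      hdiv.eventually_lt_const (half_pos ha)
    filter_upwards [h2, eventually_ge_atTop (max N 1)] with n hn2 hnN
    have hn1 : 1 ≤ n := le_trans (le_max_right _ _) hnN
    have hN' : N ≤ n := le_trans (le_max_left _ _) hnN
    have hD := hN n hN'
    have hnpos : (0:ℝ) < (n:ℝ) := by exact_mod_cast hn1
    have heq : f (T^[n] ω) / n = f ω / n + D n ω / n := by
      rw [hDdef]
      field_simp
      ring
    rw [heq]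
    have hDq : D n ω / n ≤ (q:ℝ) := by
      rw [div_le_iff₀ hnpos]
      linarith [hD]
    linarith
end

section
/- For Lebesgue-almost every real number r ∈ (0,1), the continued fraction coefficients a_i(r) satisfy lim_{n → ∞} (a_1(r) + a_2(r) + ⋯ + a_n(r))/n = +∞. -/
open Filter MeasureTheory
open scoped ENNReal

/-- The Gauss map `x ↦ {1/x}`. -/
noncomputable def gaussMap (x : ℝ) : ℝ := Int.fract (1 / x)

/-- The `(i+1)`-st continued fraction coefficient of `r`:
`a_{i+1}(r) = ⌊1 / G^i(r)⌋`, where `G` is the Gauss map, so that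
`r = 1/(a_1 + 1/(a_2 + ⋯))`. -/
noncomputable def cfCoeff (r : ℝ) (i : ℕ) : ℕ := ⌊1 / (gaussMap^[i] r)⌋₊

namespace CFAvg

noncomputable def S (n : ℕ) (x : ℝ) : ℝ := ∑ i ∈ Finset.range n, (cfCoeff x i : ℝ)

lemma measurable_gaussMap : Measurable gaussMap := by
  have : Measurable fun x : ℝ => 1 / x := measurable_const.div measurable_id
  exact measurable_fract.comp this

lemma measurable_S (n : ℕ) : Measurable (S n) := by
  apply Finset.measurable_sum
  intro i _
  have h1 : Measurable fun r : ℝ => gaussMap^[i] r := measurable_gaussMap.iterate i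
  have h2 : Measurable fun r : ℝ => 1 / gaussMap^[i] r := measurable_const.div h1
  exact measurable_from_nat.comp h2.nat_floor

lemma S_nonneg (n : ℕ) (x : ℝ) : 0 ≤ S n x :=
  Finset.sum_nonneg fun i _ => Nat.cast_nonneg _

lemma S_comp (n k : ℕ) {u : ℝ} (hu : u ∈ Set.Ioo (0:ℝ) 1) :
    S (n+1) (((k:ℝ)+1+u)⁻¹) = ((k:ℝ)+1) + S n u := by
  obtain ⟨hu0, hu1⟩ := hu
  set a : ℝ := (k:ℝ)+1 with ha
  have hapos : 0 < a + u := by positivity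
  have hinv : 1 / (a+u)⁻¹ = a + u := by
    rw [one_div, inv_inv]
  have hfloor : cfCoeff ((a+u)⁻¹) 0 = k + 1 := by
    simp only [cfCoeff, Function.iterate_zero, id_eq, hinv]
    rw [show a + u = (u + (k+1) : ℝ) by ring]
    rw [show ((k:ℝ)+1) = ((k+1 : ℕ) : ℝ) by push_cast; ring]
    rw [Nat.floor_add_natCast hu0.le, Nat.floor_eq_zero.mpr hu1]
    omega
  have hgauss : gaussMap ((a+u)⁻¹) = u := by
    simp only [gaussMap, hinv]
    rw [show a + u = (u + ((k+1 : ℤ) : ℝ) : ℝ) by push_cast; ring]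
    rw [Int.fract_add_intCast, Int.fract_eq_self.mpr ⟨hu0.le, hu1⟩]
  have hshift : ∀ i, cfCoeff ((a+u)⁻¹) (i+1) = cfCoeff u i := by
    intro i
    simp only [cfCoeff, Function.iterate_succ_apply, hgauss]
  simp only [S, Finset.sum_range_succ']
  rw [hfloor]
  push_cast
  rw [Finset.sum_congr rfl (fun i _ => by rw [hshift i])]
  ring

lemma image_inv_shift (k : ℕ) :
    (fun u : ℝ => (((k:ℝ)+1)+u)⁻¹) '' Set.Ioo 0 1
      = Set.Ioo (((k:ℝ)+2)⁻¹) (((k:ℝ)+1)⁻¹) := by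
  ext x
  constructor
  · rintro ⟨u, ⟨hu0, hu1⟩, rfl⟩
    constructor
    · apply inv_strictAnti₀ (by positivity) (by linarith)
    · apply inv_strictAnti₀ (by positivity) (by linarith)
  · rintro ⟨hx1, hx2⟩
    have hxpos : 0 < x := lt_trans (by positivity) hx1
    refine ⟨x⁻¹ - ((k:ℝ)+1), ⟨?_, ?_⟩, ?_⟩
    · have : (k:ℝ)+1 < x⁻¹ := by
        rw [show ((k:ℝ)+1) = (((k:ℝ)+1)⁻¹)⁻¹ by rw [inv_inv]]
        exact inv_strictAnti₀ hxpos hx2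
      linarith
    · have : x⁻¹ < (k:ℝ)+2 := by
        rw [show ((k:ℝ)+2) = (((k:ℝ)+2)⁻¹)⁻¹ by rw [inv_inv]]
        exact inv_strictAnti₀ (by positivity) hx1
      linarith
    · show ((k:ℝ)+1 + (x⁻¹ - ((k:ℝ)+1)))⁻¹ = x
      rw [add_sub_cancel, inv_inv]



theorem lintegral_image_eq_lintegral_abs_deriv_mul {s : Set ℝ} {f f' : ℝ → ℝ}
    (hs : MeasurableSet s) (hf' : ∀ x ∈ s, HasDerivWithinAt f (f' x) s x)
    (hf : Set.InjOn f s) (g : ℝ → ℝ≥0∞) :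
    ∫⁻ x in f '' s, g x = ∫⁻ x in s, ENNReal.ofReal |f' x| * g (f x) := by
  simpa only [ContinuousLinearMap.det_toSpanSingleton] using
    lintegral_image_eq_lintegral_abs_det_fderiv_mul volume hs
      (fun x hx => (hf' x hx).hasFDerivWithinAt) hf g

lemma Ioo_ae_eq_iUnion :
    (Set.Ioo (0:ℝ) 1 : Set ℝ) =ᵐ[volume]
      ⋃ k : ℕ, Set.Ioo (((k:ℝ)+2)⁻¹) (((k:ℝ)+1)⁻¹) := by
  have hsub : (⋃ k : ℕ, Set.Ioo (((k:ℝ)+2)⁻¹) (((k:ℝ)+1)⁻¹)) ⊆ Set.Ioo (0:ℝ) 1 := by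
    intro x hx
    obtain ⟨k, hk1, hk2⟩ := Set.mem_iUnion.mp hx
    constructor
    · exact lt_trans (by positivity) hk1
    · calc x < ((k:ℝ)+1)⁻¹ := hk2
        _ ≤ 1 := by
          rw [inv_le_one_iff₀]; right; linarith [Nat.cast_nonneg (α := ℝ) k]
  have hdiff : Set.Ioo (0:ℝ) 1 \ (⋃ k : ℕ, Set.Ioo (((k:ℝ)+2)⁻¹) (((k:ℝ)+1)⁻¹))
      ⊆ Set.range (fun k : ℕ => ((k:ℝ)+1)⁻¹) := by
    rintro x ⟨⟨hx0, hx1⟩, hnot⟩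
    have hxinv : 1 < x⁻¹ := by
      rw [lt_inv_comm₀ zero_lt_one hx0]; simpa using hx1
    set n : ℕ := ⌊x⁻¹⌋₊ with hn
    have hn1 : 1 ≤ n := Nat.le_floor (by exact_mod_cast hxinv.le)
    obtain ⟨m, hm⟩ := Nat.exists_eq_add_of_le hn1
    have hmn : (n:ℝ) = (m:ℝ) + 1 := by rw [hm]; push_cast; ring
    have hfl : (n:ℝ) ≤ x⁻¹ := Nat.floor_le (by positivity)
    have hfl2 : x⁻¹ < (n:ℝ)+1 := Nat.lt_floor_add_one _
    have hx_le : x ≤ ((m:ℝ)+1)⁻¹ := by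
      rw [le_inv_comm₀ hx0 (by positivity)]
      rw [← hmn]; exact hfl
    have hx_gt : ((m:ℝ)+2)⁻¹ < x := by
      rw [inv_lt_comm₀ (by positivity) hx0]
      rw [show ((m:ℝ)+2) = (n:ℝ)+1 by rw [hmn]; ring]; exact hfl2
    rcases eq_or_lt_of_le hx_le with heq | hlt
    · rw [Set.mem_range]
      use m
      exact heq.symm
    · exfalso
      apply hnot
      apply Set.mem_iUnion_of_mem m
      exact Set.mem_Ioo.mpr ⟨hx_gt, hlt⟩
  have hnull : volume (Set.Ioo (0:ℝ) 1 \ ⋃ k : ℕ, Set.Ioo (((k:ℝ)+2)⁻¹) (((k:ℝ)+1)⁻¹)) = 0 := by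
    exact measure_mono_null hdiff (Set.Countable.measure_zero (Set.countable_range _) _)
  refine (MeasureTheory.ae_eq_set).mpr ⟨hnull, ?_⟩
  rw [Set.diff_eq_empty.mpr hsub]
  simp




noncomputable def gM (l : ℝ) (M : ℕ) : ℝ :=
  ∑ m ∈ Finset.range M, (Real.exp (-l*m) - Real.exp (-l*(m+1))) / (2*(m+1))

lemma gM_nonneg {l : ℝ} (hl : 0 ≤ l) (M : ℕ) : 0 ≤ gM l M := by
  apply Finset.sum_nonneg
  intro m _
  apply div_nonneg _ (by positivity)
  have : -l*((m:ℝ)+1) ≤ -l*m := by nlinarith [Nat.cast_nonneg (α := ℝ) m]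
  linarith [Real.exp_le_exp.mpr this]

lemma fin_sum_bound {l : ℝ} (hl0 : 0 < l) (M : ℕ) {c d : ℝ} (hc : 0 < c) (hd0 : 0 ≤ d)
    (hdc : d ≤ c) (N : ℕ) :
    ∑ k ∈ Finset.range N,
        Real.exp (-l*((k:ℝ)+1)) * (1 / ((c*k + (c+d)) * (c*(k+1) + (c+d))))
      ≤ (1 - gM l M) * (1 / (c*(c+d))) := by
  set A : ℕ → ℝ := fun k => c*k + (c+d) with hA
  have hApos : ∀ k : ℕ, 0 < A k := fun k => by
    have : (0:ℝ) ≤ (k:ℝ) := Nat.cast_nonneg k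
    simp only [hA]; nlinarith
  set μ : ℕ → ℝ := fun k => 1 / (A k * A (k+1)) with hμdef
  have hμtel : ∀ k : ℕ, μ k = (1/c) * (1/A k - 1/A (k+1)) := by
    intro k
    have h1 := hApos k
    have h2 := hApos (k+1)
    have hne1 : A k ≠ 0 := ne_of_gt h1
    have hne2 : A (k+1) ≠ 0 := ne_of_gt h2
    have hdiff : (1:ℝ)/A k - 1/A (k+1) = c / (A k * A (k+1)) := by
      rw [div_sub_div _ _ hne1 hne2, one_mul, mul_one]
      congr 1
      simp only [hA]; push_cast; ring
    simp only [hμdef]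
    rw [hdiff]
    field_simp
  have hμnonneg : ∀ k, 0 ≤ μ k := fun k => by
    have := hApos k; have := hApos (k+1); positivity
  have hW : (0:ℝ) < 1 / (c*(c+d)) := by positivity
  have hgoalterm : ∀ k : ℕ, Real.exp (-l*((k:ℝ)+1)) * (1 / ((c*k + (c+d)) * (c*(k+1) + (c+d))))
      = Real.exp (-l*((k:ℝ)+1)) * μ k := by
    intro k
    simp only [hμdef, hA]
    push_cast
    ring
  rw [Finset.sum_congr rfl (fun k _ => hgoalterm k)]
  -- partial sums of μ are bounded by W
  have hsum_le : ∀ n : ℕ, ∑ k ∈ Finset.range n, μ k ≤ 1 / (c*(c+d)) := by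
    intro n
    have : ∑ k ∈ Finset.range n, μ k
        = (1/c) * ∑ k ∈ Finset.range n, (1/A k - 1/A (k+1)) := by
      rw [Finset.mul_sum]; exact Finset.sum_congr rfl fun k _ => hμtel k
    rw [this, Finset.sum_range_sub' (fun k => 1/A k)]
    have h0 : A 0 = c + d := by simp [hA]
    have hn := hApos n
    have : (1:ℝ)/A 0 - 1/A n ≤ 1/A 0 := by
      have : 0 ≤ 1/A n := by positivity
      linarith
    calc (1/c) * (1/A 0 - 1/A n) ≤ (1/c) * (1/A 0) := by
          apply mul_le_mul_of_nonneg_left this (by positivity)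
      _ = 1 / (c*(c+d)) := by rw [h0]; field_simp
  -- tail partial sums over Ico m (2m+2)
  have htail : ∀ m : ℕ, ∑ k ∈ Finset.Ico m (2*m+2), μ k
      ≥ (1 / (c*(c+d))) * (1/(2*((m:ℝ)+1))) := by
    intro m
    have heq : ∑ k ∈ Finset.Ico m (2*m+2), μ k = (1/c) * (1/A m - 1/A (2*m+2)) := by
      rw [Finset.sum_Ico_eq_sum_range]
      have hlen : 2*m+2-m = m+2 := by omega
      rw [hlen]
      have hterm : ∀ i ∈ Finset.range (m+2), μ (m+i)
          = (1/c) * ((fun j => 1/A (m+j)) i - (fun j => 1/A (m+j)) (i+1)) := by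
        intro i _
        have := hμtel (m+i)
        simpa [← add_assoc] using this
      rw [Finset.sum_congr rfl hterm, ← Finset.mul_sum,
        Finset.sum_range_sub' (fun j => 1/A (m+j))]
      have : m + (m+2) = 2*m+2 := by omega
      simp only [this, Nat.add_zero]
    rw [heq]
    have h1 := hApos m
    have h2 := hApos (2*m+2)
    have hhalf : 1/A (2*m+2) ≤ 1/(2*A m) := by
      apply one_div_le_one_div_of_le (by positivity)
      simp only [hA]; push_cast; nlinarith [Nat.cast_nonneg (α := ℝ) m]
    have hAm : A m ≤ ((m:ℝ)+1)*(c+d) := by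
      simp only [hA]; nlinarith [Nat.cast_nonneg (α := ℝ) m]
    have h3 : 1/(2*A m) ≥ 1/(2*(((m:ℝ)+1)*(c+d))) := by
      apply one_div_le_one_div_of_le (by positivity)
      linarith
    have h4 : (1:ℝ)/A m - 1/A (2*m+2) ≥ 1/(2*A m) := by
      have : 1/A m = 1/(2*A m) + 1/(2*A m) := by field_simp; ring
      linarith
    calc (1/c) * (1/A m - 1/A (2*m+2)) ≥ (1/c) * (1/(2*A m)) := by
          apply mul_le_mul_of_nonneg_left h4 (by positivity)
      _ ≥ (1/c) * (1/(2*(((m:ℝ)+1)*(c+d)))) := by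
          apply mul_le_mul_of_nonneg_left h3 (by positivity)
      _ = (1 / (c*(c+d))) * (1/(2*((m:ℝ)+1))) := by field_simp
  -- reduce to large N
  have main : ∀ n : ℕ, 2*M+2 ≤ n →
      ∑ k ∈ Finset.range n, Real.exp (-l*((k:ℝ)+1)) * μ k
        ≤ (1 - gM l M) * (1 / (c*(c+d))) := by
    intro n hn
    -- the lower bound on the complementary sum
    have hw : ∀ m : ℕ, 0 ≤ Real.exp (-l*m) - Real.exp (-l*((m:ℝ)+1)) := by
      intro m
      have : -l*((m:ℝ)+1) ≤ -l*m := by nlinarith [Nat.cast_nonneg (α := ℝ) m]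
      linarith [Real.exp_le_exp.mpr this]
    have step1 : ∀ k : ℕ,
        ∑ m ∈ Finset.range M, (if m ≤ k then Real.exp (-l*m) - Real.exp (-l*((m:ℝ)+1)) else 0)
          ≤ 1 - Real.exp (-l*((k:ℝ)+1)) := by
      intro k
      have hfilter : (Finset.range M).filter (fun m => m ≤ k) = Finset.range (min (k+1) M) := by
        ext m; simp [Finset.mem_filter, Finset.mem_range]; omega
      rw [Finset.sum_ite, Finset.sum_const_zero, add_zero, hfilter]
      have htel : ∑ m ∈ Finset.range (min (k+1) M),
          (Real.exp (-l*m) - Real.exp (-l*((m:ℝ)+1)))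
          = Real.exp (-l*(0:ℕ)) - Real.exp (-l*(min (k+1) M : ℕ)) := by
        rw [← Finset.sum_range_sub' (fun m => Real.exp (-l*(m:ℕ)))]
        apply Finset.sum_congr rfl
        intro m _
        congr 2
        push_cast; ring
      rw [htel]
      simp only [Nat.cast_zero, mul_zero, neg_zero, Real.exp_zero]
      have : Real.exp (-l*((k:ℝ)+1)) ≤ Real.exp (-l*(min (k+1) M : ℕ)) := by
        apply Real.exp_le_exp.mpr
        have : ((min (k+1) M : ℕ) : ℝ) ≤ (k:ℝ)+1 := by
          have : min (k+1) M ≤ k+1 := min_le_left _ _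
          push_cast; exact_mod_cast by exact_mod_cast Nat.cast_le.mpr this
        nlinarith
      linarith
    have LB : ∑ k ∈ Finset.range n, (1 - Real.exp (-l*((k:ℝ)+1))) * μ k
        ≥ gM l M * (1 / (c*(c+d))) := by
      have hstep : ∀ k ∈ Finset.range n,
          (∑ m ∈ Finset.range M,
            (if m ≤ k then Real.exp (-l*m) - Real.exp (-l*((m:ℝ)+1)) else 0)) * μ k
          ≤ (1 - Real.exp (-l*((k:ℝ)+1))) * μ k := by
        intro k _
        exact mul_le_mul_of_nonneg_right (step1 k) (hμnonneg k)
      have hswap : ∑ k ∈ Finset.range n,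
          (∑ m ∈ Finset.range M,
            (if m ≤ k then Real.exp (-l*m) - Real.exp (-l*((m:ℝ)+1)) else 0)) * μ k
          = ∑ m ∈ Finset.range M, ∑ k ∈ Finset.range n,
            (if m ≤ k then (Real.exp (-l*m) - Real.exp (-l*((m:ℝ)+1))) * μ k else 0) := by
        rw [Finset.sum_comm]
        apply Finset.sum_congr rfl
        intro k _
        rw [Finset.sum_mul]
        apply Finset.sum_congr rfl
        intro m _
        rw [ite_mul, zero_mul]
      have hinner : ∀ m ∈ Finset.range M,
          ∑ k ∈ Finset.range n,
            (if m ≤ k then (Real.exp (-l*m) - Real.exp (-l*((m:ℝ)+1))) * μ k else 0)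
          ≥ (Real.exp (-l*m) - Real.exp (-l*((m:ℝ)+1))) * ((1 / (c*(c+d))) * (1/(2*((m:ℝ)+1)))) := by
        intro m hm
        have hmM : m < M := Finset.mem_range.mp hm
        have hfilter : (Finset.range n).filter (fun k => m ≤ k) = Finset.Ico m n := by
          ext k; simp [Finset.mem_filter, Finset.mem_range, Finset.mem_Ico]; omega
        rw [Finset.sum_ite, Finset.sum_const_zero, add_zero, hfilter, ← Finset.mul_sum]
        have hsub : Finset.Ico m (2*m+2) ⊆ Finset.Ico m n :=
          Finset.Ico_subset_Ico le_rfl ((by omega : 2*m+2 ≤ n))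
        have : ∑ k ∈ Finset.Ico m (2*m+2), μ k ≤ ∑ k ∈ Finset.Ico m n, μ k :=
          Finset.sum_le_sum_of_subset_of_nonneg hsub (fun k _ _ => hμnonneg k)
        have h5 := htail m
        apply mul_le_mul_of_nonneg_left _ (hw m)
        linarith
      calc ∑ k ∈ Finset.range n, (1 - Real.exp (-l*((k:ℝ)+1))) * μ k
          ≥ ∑ k ∈ Finset.range n,
            (∑ m ∈ Finset.range M,
              (if m ≤ k then Real.exp (-l*m) - Real.exp (-l*((m:ℝ)+1)) else 0)) * μ k :=
            Finset.sum_le_sum hstep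
        _ = ∑ m ∈ Finset.range M, ∑ k ∈ Finset.range n,
              (if m ≤ k then (Real.exp (-l*m) - Real.exp (-l*((m:ℝ)+1))) * μ k else 0) := hswap
        _ ≥ ∑ m ∈ Finset.range M,
              (Real.exp (-l*m) - Real.exp (-l*((m:ℝ)+1))) * ((1 / (c*(c+d))) * (1/(2*((m:ℝ)+1)))) :=
            Finset.sum_le_sum hinner
        _ = gM l M * (1 / (c*(c+d))) := by
            simp only [gM]
            rw [Finset.sum_mul]
            apply Finset.sum_congr rfl
            intro m _
            ring
    have hsplit : ∑ k ∈ Finset.range n, Real.exp (-l*((k:ℝ)+1)) * μ k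
        = ∑ k ∈ Finset.range n, μ k
          - ∑ k ∈ Finset.range n, (1 - Real.exp (-l*((k:ℝ)+1))) * μ k := by
      rw [← Finset.sum_sub_distrib]
      apply Finset.sum_congr rfl
      intro k _
      ring
    rw [hsplit]
    have := hsum_le n
    nlinarith [LB]
  -- general N
  have hNle : ∑ k ∈ Finset.range N, Real.exp (-l*((k:ℝ)+1)) * μ k
      ≤ ∑ k ∈ Finset.range (N + (2*M+2)), Real.exp (-l*((k:ℝ)+1)) * μ k := by
    apply Finset.sum_le_sum_of_subset_of_nonneg
    · apply Finset.range_subset_range.mpr; omega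
    · intro k _ _
      exact mul_nonneg (Real.exp_nonneg _) (hμnonneg k)
  exact le_trans hNle (main (N + (2*M+2)) (by omega))



lemma tsum_ofReal_le {b : ℕ → ℝ} (hb : ∀ k, 0 ≤ b k) {B : ℝ}
    (h : ∀ N, ∑ k ∈ Finset.range N, b k ≤ B) :
    ∑' k, ENNReal.ofReal (b k) ≤ ENNReal.ofReal B := by
  rw [ENNReal.tsum_eq_iSup_sum]
  apply iSup_le
  intro s
  obtain ⟨N, hN⟩ := s.exists_nat_subset_range
  calc ∑ k ∈ s, ENNReal.ofReal (b k)
      ≤ ∑ k ∈ Finset.range N, ENNReal.ofReal (b k) :=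
        Finset.sum_le_sum_of_subset hN
    _ = ENNReal.ofReal (∑ k ∈ Finset.range N, b k) :=
        (ENNReal.ofReal_sum_of_nonneg (fun k _ => hb k)).symm
    _ ≤ ENNReal.ofReal B := ENNReal.ofReal_le_ofReal (h N)


lemma lintegral_Ioo_decomp (h : ℝ → ℝ≥0∞) :
    ∫⁻ x in Set.Ioo (0:ℝ) 1, h x
      = ∑' k : ℕ, ∫⁻ x in Set.Ioo (((k:ℝ)+2)⁻¹) (((k:ℝ)+1)⁻¹), h x := by
  have key : ∀ i j : ℕ, i < j →
      Disjoint (Set.Ioo (((i:ℝ)+2)⁻¹) (((i:ℝ)+1)⁻¹))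
        (Set.Ioo (((j:ℝ)+2)⁻¹) (((j:ℝ)+1)⁻¹)) := by
    intro i j hij
    rw [Set.disjoint_left]
    rintro x ⟨hx1, _⟩ ⟨_, hx4⟩
    have hcast : (i:ℝ)+2 ≤ (j:ℝ)+1 := by
      have : ((i+2 : ℕ):ℝ) ≤ ((j+1 : ℕ):ℝ) := Nat.cast_le.mpr (by omega)
      push_cast at this
      linarith
    have hle : ((j:ℝ)+1)⁻¹ ≤ ((i:ℝ)+2)⁻¹ :=
      inv_anti₀ (by positivity) hcast
    linarith
  have hdisj : Pairwise (Function.onFun Disjoint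
      (fun k : ℕ => Set.Ioo (((k:ℝ)+2)⁻¹) (((k:ℝ)+1)⁻¹))) := by
    intro i j hij
    rcases lt_or_gt_of_ne hij with h' | h'
    · exact key i j h'
    · exact (key j i h').symm
  rw [setLIntegral_congr Ioo_ae_eq_iUnion]
  exact lintegral_iUnion (fun k => measurableSet_Ioo) hdisj h

lemma gM_le_half {l : ℝ} (hl : 0 < l) (M : ℕ) : gM l M ≤ 1/2 := by
  have h1 : ∀ m ∈ Finset.range M,
      (Real.exp (-l*m) - Real.exp (-l*((m:ℝ)+1))) / (2*((m:ℝ)+1))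
        ≤ (Real.exp (-l*m) - Real.exp (-l*((m:ℝ)+1))) * (1/2) := by
    intro m _
    have hw : 0 ≤ Real.exp (-l*m) - Real.exp (-l*((m:ℝ)+1)) := by
      have : -l*((m:ℝ)+1) ≤ -l*m := by nlinarith [Nat.cast_nonneg (α := ℝ) m]
      linarith [Real.exp_le_exp.mpr this]
    rw [div_eq_mul_inv]
    apply mul_le_mul_of_nonneg_left _ hw
    rw [one_div]
    apply inv_anti₀ (by norm_num)
    nlinarith [Nat.cast_nonneg (α := ℝ) m]
  have h2 : ∑ m ∈ Finset.range M, (Real.exp (-l*m) - Real.exp (-l*((m:ℝ)+1))) * (1/2)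
      = (1 - Real.exp (-l*M)) * (1/2) := by
    rw [← Finset.sum_mul]
    congr 1
    have hterm : ∀ m ∈ Finset.range M, Real.exp (-l*(m:ℝ)) - Real.exp (-l*((m:ℝ)+1))
        = (fun j : ℕ => Real.exp (-l*(j:ℝ))) m - (fun j : ℕ => Real.exp (-l*(j:ℝ))) (m+1) := by
      intro m _
      simp only
      congr 2
      push_cast
      ring
    rw [Finset.sum_congr rfl hterm, Finset.sum_range_sub' (fun j : ℕ => Real.exp (-l*(j:ℝ)))]
    simp
  have h3 := Finset.sum_le_sum h1
  rw [gM]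
  have h4 : (1 - Real.exp (-l*(M:ℝ))) * (1/2) ≤ 1/2 := by
    have := Real.exp_nonneg (-l*(M:ℝ))
    nlinarith
  calc ∑ m ∈ Finset.range M, (Real.exp (-l*m) - Real.exp (-l*((m:ℝ)+1))) / (2*((m:ℝ)+1))
      ≤ ∑ m ∈ Finset.range M, (Real.exp (-l*m) - Real.exp (-l*((m:ℝ)+1))) * (1/2) := h3
    _ = (1 - Real.exp (-l*(M:ℝ))) * (1/2) := h2
    _ ≤ 1/2 := h4

lemma key_lemma {l : ℝ} (hl : 0 < l) (M : ℕ) (n : ℕ) :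
    ∀ c d : ℝ, 0 < c → 0 ≤ d → d ≤ c →
    ∫⁻ x in Set.Ioo (0:ℝ) 1,
        ENNReal.ofReal (Real.exp (-l * S n x) * (1/(c + d*x)^2))
      ≤ ENNReal.ofReal ((1 - gM l M)^n * (2 / (c*(c+d)))) := by
  have hg0 := gM_nonneg hl.le M
  have hg1 : gM l M ≤ 1/2 := gM_le_half hl M
  induction n with
  | zero =>
    intro c d hc hd0 hdc
    simp only [S, Finset.range_zero, Finset.sum_empty, mul_zero, neg_zero, Real.exp_zero,
      one_mul, pow_zero]
    have hptwise : ∀ x ∈ Set.Ioo (0:ℝ) 1,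
        ENNReal.ofReal (1/(c + d*x)^2) ≤ ENNReal.ofReal (1/c^2) := by
      rintro x ⟨hx0, _⟩
      apply ENNReal.ofReal_le_ofReal
      apply one_div_le_one_div_of_le (by positivity)
      have h6 : c ≤ c + d*x := by nlinarith [mul_nonneg hd0 hx0.le]
      exact pow_le_pow_left₀ hc.le h6 2
    calc ∫⁻ x in Set.Ioo (0:ℝ) 1, ENNReal.ofReal (1/(c + d*x)^2)
        ≤ ∫⁻ _ in Set.Ioo (0:ℝ) 1, ENNReal.ofReal (1/c^2) :=
          setLIntegral_mono' measurableSet_Ioo hptwise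
      _ = ENNReal.ofReal (1/c^2) * volume (Set.Ioo (0:ℝ) 1) := setLIntegral_const _ _
      _ = ENNReal.ofReal (1/c^2) := by
          rw [Real.volume_Ioo]
          norm_num
      _ ≤ ENNReal.ofReal (2 / (c*(c+d))) := by
          apply ENNReal.ofReal_le_ofReal
          rw [div_le_div_iff₀ (by positivity) (by positivity)]
          nlinarith
  | succ n ih =>
    intro c d hc hd0 hdc
    rw [lintegral_Ioo_decomp]
    set G : ℝ := 1 - gM l M with hG
    have hGpos : 0 < G := by rw [hG]; linarith
    set b : ℕ → ℝ := fun k => 2 * G^n *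
        (Real.exp (-l*((k:ℝ)+1)) * (1 / ((c*k + (c+d)) * (c*(k+1) + (c+d))))) with hb
    have hApos : ∀ k : ℕ, (0:ℝ) < c*k + (c+d) := by
      intro k
      have : (0:ℝ) ≤ (k:ℝ) := Nat.cast_nonneg k
      nlinarith
    have hA'pos : ∀ k : ℕ, (0:ℝ) < c*((k:ℝ)+1) + (c+d) := by
      intro k
      have : (0:ℝ) ≤ (k:ℝ) := Nat.cast_nonneg k
      nlinarith
    have piece : ∀ k : ℕ,
        ∫⁻ x in Set.Ioo (((k:ℝ)+2)⁻¹) (((k:ℝ)+1)⁻¹),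
            ENNReal.ofReal (Real.exp (-l * S (n+1) x) * (1/(c + d*x)^2))
          ≤ ENNReal.ofReal (b k) := by
      intro k
      set a : ℝ := (k:ℝ)+1 with ha
      have ha1 : (1:ℝ) ≤ a := by rw [ha]; linarith [Nat.cast_nonneg (α := ℝ) k]
      set f : ℝ → ℝ := fun u => (a+u)⁻¹ with hf
      have hapos : ∀ u ∈ Set.Ioo (0:ℝ) 1, 0 < a + u := by
        rintro u ⟨hu0, _⟩
        linarith
      have hderiv : ∀ u ∈ Set.Ioo (0:ℝ) 1,
          HasDerivWithinAt f (-1/(a+u)^2) (Set.Ioo (0:ℝ) 1) u := by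
        intro u hu
        have h1 : HasDerivWithinAt (fun v : ℝ => a + v) 1 (Set.Ioo (0:ℝ) 1) u :=
          (hasDerivWithinAt_id u _).const_add a
        have h2 := h1.inv (ne_of_gt (hapos u hu))
        exact h2
      have hinj : Set.InjOn f (Set.Ioo (0:ℝ) 1) := by
        intro u hu v hv huv
        have := inv_inj.mp huv
        linarith
      have himg : Set.Ioo (((k:ℝ)+2)⁻¹) (((k:ℝ)+1)⁻¹) = f '' Set.Ioo 0 1 := by
        rw [hf, ha]
        exact (image_inv_shift k).symm
      rw [himg, lintegral_image_eq_lintegral_abs_deriv_mul measurableSet_Ioo hderiv hinj]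
      set c' : ℝ := c*a + d with hc'
      have hc'pos : 0 < c' := by rw [hc']; nlinarith
      have hcc' : c ≤ c' := by rw [hc']; nlinarith
      have hptwise : ∀ u ∈ Set.Ioo (0:ℝ) 1,
          ENNReal.ofReal |(-1/(a+u)^2)| *
              ENNReal.ofReal (Real.exp (-l * S (n+1) (f u)) * (1/(c + d*(f u))^2))
            = ENNReal.ofReal (Real.exp (-l*a)) *
              ENNReal.ofReal (Real.exp (-l * S n u) * (1/(c' + c*u)^2)) := by
        intro u hu
        obtain ⟨hu0, hu1⟩ := hu
        have hau : 0 < a + u := by linarith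
        have hS : S (n+1) (f u) = a + S n u := by
          simp only [hf, ha]
          exact S_comp n k ⟨hu0, hu1⟩
        have habs : |(-1/(a+u)^2)| = 1/(a+u)^2 := by
          rw [abs_div, abs_neg, abs_one, abs_of_pos (by positivity)]
        have hexp : Real.exp (-l * (a + S n u)) = Real.exp (-l*a) * Real.exp (-l * S n u) := by
          rw [← Real.exp_add]
          congr 1
          ring
        have hrw : (1/(a+u)^2) * (1/(c + d*((a+u)⁻¹))^2) = 1/(c' + c*u)^2 := by
          have h1 : a + u ≠ 0 := ne_of_gt hau
          have h3 : (c + d*(a+u)⁻¹) * (a+u) = c' + c*u := by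
            rw [hc']
            field_simp
            ring
          rw [← h3, mul_pow, one_div_mul_one_div, mul_comm ((a+u)^2)]
        have hreal : (1/(a+u)^2) * (Real.exp (-l * (a + S n u)) * (1/(c + d*((a+u)⁻¹))^2))
            = Real.exp (-l*a) * (Real.exp (-l * S n u) * (1/(c' + c*u)^2)) := by
          rw [hexp, ← hrw]
          ring
        calc ENNReal.ofReal |(-1/(a+u)^2)| *
              ENNReal.ofReal (Real.exp (-l * S (n+1) (f u)) * (1/(c + d*(f u))^2))
            = ENNReal.ofReal ((1/(a+u)^2) *
                (Real.exp (-l * (a + S n u)) * (1/(c + d*((a+u)⁻¹))^2))) := by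
              rw [habs, hS, ← ENNReal.ofReal_mul (by positivity)]
              try simp only [hf]
          _ = ENNReal.ofReal (Real.exp (-l*a) *
                (Real.exp (-l * S n u) * (1/(c' + c*u)^2))) := by rw [hreal]
          _ = ENNReal.ofReal (Real.exp (-l*a)) *
                ENNReal.ofReal (Real.exp (-l * S n u) * (1/(c' + c*u)^2)) :=
              ENNReal.ofReal_mul (Real.exp_nonneg _)
      rw [setLIntegral_congr_fun measurableSet_Ioo hptwise]
      rw [lintegral_const_mul' _ _ ENNReal.ofReal_ne_top]
      have hihapp := ih c' c hc'pos hc.le hcc'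
      calc ENNReal.ofReal (Real.exp (-l*a)) *
            ∫⁻ u in Set.Ioo (0:ℝ) 1,
              ENNReal.ofReal (Real.exp (-l * S n u) * (1/(c' + c*u)^2))
          ≤ ENNReal.ofReal (Real.exp (-l*a)) *
              ENNReal.ofReal ((1 - gM l M)^n * (2 / (c'*(c'+c)))) :=
            mul_le_mul_right hihapp _
        _ = ENNReal.ofReal (Real.exp (-l*a) * ((1 - gM l M)^n * (2 / (c'*(c'+c))))) :=
            (ENNReal.ofReal_mul (Real.exp_nonneg _)).symm
        _ = ENNReal.ofReal (b k) := by
            congr 1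
            rw [hb, hc', ha, ← hG]
            ring
    have hbnonneg : ∀ k, 0 ≤ b k := by
      intro k
      rw [hb]
      have h1 := hApos k
      have h2 := hA'pos k
      have h3 : (0:ℝ) ≤ G^n := pow_nonneg hGpos.le n
      have h4 : 0 ≤ Real.exp (-l*((k:ℝ)+1)) := Real.exp_nonneg _
      have h5 : (0:ℝ) ≤ 1 / ((c*k + (c+d)) * (c*(k+1) + (c+d))) := by positivity
      nlinarith [mul_nonneg h4 h5]
    have hpartial : ∀ N, ∑ k ∈ Finset.range N, b k ≤ (1 - gM l M)^(n+1) * (2 / (c*(c+d))) := by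
      intro N
      have h := fin_sum_bound hl M hc hd0 hdc N
      have h2G : (0:ℝ) ≤ 2 * G^n := by
        have := pow_nonneg hGpos.le n
        linarith
      calc ∑ k ∈ Finset.range N, b k
          = 2 * G^n * ∑ k ∈ Finset.range N,
              Real.exp (-l*((k:ℝ)+1)) * (1 / ((c*k + (c+d)) * (c*(k+1) + (c+d)))) := by
            rw [hb, Finset.mul_sum]
        _ ≤ 2 * G^n * ((1 - gM l M) * (1 / (c*(c+d)))) :=
            mul_le_mul_of_nonneg_left h h2G
        _ = (1 - gM l M)^(n+1) * (2 / (c*(c+d))) := by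
            rw [hG]
            ring
    calc ∑' k : ℕ, ∫⁻ x in Set.Ioo (((k:ℝ)+2)⁻¹) (((k:ℝ)+1)⁻¹),
          ENNReal.ofReal (Real.exp (-l * S (n+1) x) * (1/(c + d*x)^2))
        ≤ ∑' k : ℕ, ENNReal.ofReal (b k) := ENNReal.tsum_le_tsum piece
      _ ≤ ENNReal.ofReal ((1 - gM l M)^(n+1) * (2 / (c*(c+d)))) :=
          tsum_ofReal_le hbnonneg hpartial



lemma measurable_expS (l : ℝ) (C : ℝ) (n : ℕ) :
    Measurable fun r : ℝ => ENNReal.ofReal (Real.exp (l*C*n - l * S n r)) := by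
  apply ENNReal.measurable_ofReal.comp
  apply Real.measurable_exp.comp
  exact measurable_const.sub ((measurable_S n).const_mul l)

lemma chernoff {l : ℝ} (hl : 0 < l) (M : ℕ) (C : ℝ) (n : ℕ) :
    (volume.restrict (Set.Ioo (0:ℝ) 1)) {r : ℝ | S n r ≤ C * n}
      ≤ ENNReal.ofReal ((Real.exp (l*C) * (1 - gM l M))^n * 2) := by
  have hmeas := measurable_expS l C n
  have hsub : {r : ℝ | S n r ≤ C * n} ⊆
      {r : ℝ | 1 ≤ ENNReal.ofReal (Real.exp (l*C*n - l * S n r))} := by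
    intro r hr
    rw [Set.mem_setOf_eq] at hr ⊢
    rw [ENNReal.one_le_ofReal]
    apply Real.one_le_exp
    nlinarith
  calc (volume.restrict (Set.Ioo (0:ℝ) 1)) {r : ℝ | S n r ≤ C * n}
      ≤ (volume.restrict (Set.Ioo (0:ℝ) 1))
          {r : ℝ | 1 ≤ ENNReal.ofReal (Real.exp (l*C*n - l * S n r))} := measure_mono hsub
    _ ≤ ∫⁻ r, ENNReal.ofReal (Real.exp (l*C*n - l * S n r))
          ∂(volume.restrict (Set.Ioo (0:ℝ) 1)) := by
        have h := mul_meas_ge_le_lintegral₀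
          (μ := volume.restrict (Set.Ioo (0:ℝ) 1)) hmeas.aemeasurable 1
        rwa [one_mul] at h
    _ = ∫⁻ r in Set.Ioo (0:ℝ) 1, ENNReal.ofReal (Real.exp (l*C*n)) *
          ENNReal.ofReal (Real.exp (-l * S n r) * (1/((1:ℝ) + 0*r)^2)) := by
        apply lintegral_congr
        intro r
        rw [← ENNReal.ofReal_mul (Real.exp_nonneg _)]
        congr 1
        rw [show (1:ℝ) + 0*r = 1 by ring, one_pow, div_one, mul_one, ← Real.exp_add]
        congr 1
        ring
    _ = ENNReal.ofReal (Real.exp (l*C*n)) *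
          ∫⁻ r in Set.Ioo (0:ℝ) 1,
            ENNReal.ofReal (Real.exp (-l * S n r) * (1/((1:ℝ) + 0*r)^2)) :=
        lintegral_const_mul' _ _ ENNReal.ofReal_ne_top
    _ ≤ ENNReal.ofReal (Real.exp (l*C*n)) *
          ENNReal.ofReal ((1 - gM l M)^n * (2/((1:ℝ)*((1:ℝ)+0)))) :=
        mul_le_mul_right (key_lemma hl M n 1 0 one_pos le_rfl zero_le_one) _
    _ = ENNReal.ofReal ((Real.exp (l*C) * (1 - gM l M))^n * 2) := by
        rw [← ENNReal.ofReal_mul (Real.exp_nonneg _)]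
        congr 1
        rw [show l*C*(n:ℝ) = (n:ℝ)*(l*C) by ring, Real.exp_nat_mul, mul_pow]
        norm_num
        ring

lemma eventually_large (C : ℕ) :
    ∀ᵐ r ∂(volume.restrict (Set.Ioo (0:ℝ) 1)), ∀ᶠ n in atTop, (C:ℝ) * n < S n r := by
  obtain ⟨M, hM⟩ := (Real.tendsto_sum_range_one_div_nat_succ_atTop.eventually_ge_atTop
    (16*((C:ℝ)+1))).exists
  have hMpos : 0 < M := by
    by_contra h
    push_neg at h
    interval_cases M
    simp only [Finset.range_zero, Finset.sum_empty] at hM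
    nlinarith [Nat.cast_nonneg (α := ℝ) C]
  have hMR : (0:ℝ) < M := by exact_mod_cast hMpos
  set l : ℝ := 1/(M:ℝ) with hldef
  have hl : 0 < l := by positivity
  have hl1 : l ≤ 1 := by
    rw [hldef, div_le_one hMR]
    exact_mod_cast hMpos
  have hlM : l * M = 1 := by
    rw [hldef]
    field_simp
  have hwlb : ∀ m : ℕ, m < M → l/8 ≤ Real.exp (-l*m) - Real.exp (-l*((m:ℝ)+1)) := by
    intro m hm
    have hfactor : Real.exp (-l*m) - Real.exp (-l*((m:ℝ)+1))
        = Real.exp (-l*m) * (1 - Real.exp (-l)) := by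
      rw [mul_sub, mul_one, ← Real.exp_add]
      congr 2
      ring
    rw [hfactor]
    have h1 : (1:ℝ)/4 ≤ Real.exp (-l*m) := by
      have hml : l*m ≤ 1 := by
        have hmM : (m:ℝ) ≤ (M:ℝ) := by exact_mod_cast hm.le
        nlinarith
      have hmono : Real.exp (-1) ≤ Real.exp (-l*m) := Real.exp_le_exp.mpr (by linarith)
      have he4 : Real.exp 1 < 4 := by linarith [Real.exp_one_lt_d9]
      have hq : (1:ℝ)/4 < Real.exp (-1) := by
        rw [Real.exp_neg, one_div]
        exact inv_strictAnti₀ (Real.exp_pos 1) he4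
      linarith
    have h2 : l/2 ≤ 1 - Real.exp (-l) := by
      have hle : Real.exp (-l) ≤ 1/(1+l) := by
        rw [Real.exp_neg, one_div]
        exact inv_anti₀ (by linarith) (by linarith [Real.add_one_le_exp l])
      have heq : 1 - 1/(1+l) = l/(1+l) := by
        field_simp
        ring
      have hub : l/2 ≤ l/(1+l) :=
        div_le_div_of_nonneg_left hl.le (by linarith) (by linarith)
      linarith
    nlinarith [Real.exp_nonneg (-l*(m:ℝ))]
  have hgl : l * ((C:ℝ)+1) ≤ gM l M := by
    have hterm : ∀ m ∈ Finset.range M,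
        (l/16) * (1/((m:ℝ)+1))
          ≤ (Real.exp (-l*m) - Real.exp (-l*((m:ℝ)+1))) / (2*((m:ℝ)+1)) := by
      intro m hm
      have hw := hwlb m (Finset.mem_range.mp hm)
      have hm1 : (0:ℝ) < 2*((m:ℝ)+1) := by positivity
      have heq : (l/16) * (1/((m:ℝ)+1)) = (l/8) / (2*((m:ℝ)+1)) := by
        rw [div_mul_div_comm, div_div, mul_one]
        congr 1
        ring
      rw [heq]
      exact (div_le_div_iff_of_pos_right hm1).mpr hw
    calc l * ((C:ℝ)+1) = (l/16) * (16*((C:ℝ)+1)) := by ring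
      _ ≤ (l/16) * ∑ i ∈ Finset.range M, 1/((i:ℝ)+1) :=
          mul_le_mul_of_nonneg_left hM (by positivity)
      _ = ∑ m ∈ Finset.range M, (l/16)*(1/((m:ℝ)+1)) := Finset.mul_sum _ _ _
      _ ≤ gM l M := Finset.sum_le_sum hterm
  set ρ : ℝ := Real.exp (l*C) * (1 - gM l M) with hρ
  have hg0 := gM_nonneg hl.le M
  have hg2 := gM_le_half hl M
  have hρ0 : 0 ≤ ρ := by
    apply mul_nonneg (Real.exp_nonneg _)
    linarith
  have hρle : ρ ≤ Real.exp (-l) := by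
    have h1 : 1 - gM l M ≤ Real.exp (-(gM l M)) := by
      have := Real.add_one_le_exp (-(gM l M))
      linarith
    calc ρ ≤ Real.exp (l*C) * Real.exp (-(gM l M)) := by
          rw [hρ]
          exact mul_le_mul_of_nonneg_left h1 (Real.exp_nonneg _)
      _ = Real.exp (l*C + -(gM l M)) := (Real.exp_add _ _).symm
      _ ≤ Real.exp (-l) := Real.exp_le_exp.mpr (by nlinarith)
  have hρ1 : ρ < 1 := by
    have : Real.exp (-l) < Real.exp 0 := Real.exp_lt_exp.mpr (by linarith)
    rw [Real.exp_zero] at this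
    linarith
  have hsum : (∑' n : ℕ, (volume.restrict (Set.Ioo (0:ℝ) 1))
      {r : ℝ | S n r ≤ (C:ℝ) * n}) ≠ ⊤ := by
    have hb : ∀ n : ℕ, 0 ≤ ρ^n * 2 := fun n => by positivity
    have hpart : ∀ N, ∑ n ∈ Finset.range N, ρ^n * 2 ≤ (1/(1-ρ)) * 2 := by
      intro N
      rw [← Finset.sum_mul]
      apply mul_le_mul_of_nonneg_right _ (by norm_num)
      have hρne : ρ ≠ 1 := ne_of_lt hρ1
      rw [geom_sum_eq hρne]
      have hpos : (0:ℝ) < 1 - ρ := by linarith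
      have h2 : (ρ^N - 1)/(ρ-1) = (1 - ρ^N)/(1-ρ) := by
        rw [← neg_div_neg_eq]
        ring_nf
      rw [h2]
      exact (div_le_div_iff_of_pos_right hpos).mpr (by nlinarith [pow_nonneg hρ0 N])
    have hle : (∑' n : ℕ, (volume.restrict (Set.Ioo (0:ℝ) 1))
        {r : ℝ | S n r ≤ (C:ℝ) * n}) ≤ ENNReal.ofReal ((1/(1-ρ)) * 2) := by
      calc (∑' n : ℕ, (volume.restrict (Set.Ioo (0:ℝ) 1)) {r : ℝ | S n r ≤ (C:ℝ) * n})
          ≤ ∑' n : ℕ, ENNReal.ofReal (ρ^n * 2) := by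
            apply ENNReal.tsum_le_tsum
            intro n
            have := chernoff hl M (C:ℝ) n
            rw [← hρ] at this
            exact this
        _ ≤ ENNReal.ofReal ((1/(1-ρ)) * 2) := tsum_ofReal_le hb hpart
    exact (lt_of_le_of_lt hle ENNReal.ofReal_lt_top).ne
  filter_upwards [MeasureTheory.ae_eventually_notMem hsum] with r hr
  exact hr.mono (fun n hn => not_le.mp hn)

end CFAvg


/-- For Lebesgue-almost every `r ∈ (0,1)`, the averages of the continued
fraction coefficients `(a_1(r) + ⋯ + a_n(r))/n` tend to `+∞`. -/
theorem cf_coefficients_average_infinite :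
    ∀ᵐ r ∂(volume.restrict (Set.Ioo (0 : ℝ) 1)),
      Tendsto (fun n : ℕ => (∑ i ∈ Finset.range n, (cfCoeff r i : ℝ)) / n)
        atTop atTop := by
  have hall : ∀ᵐ r ∂(volume.restrict (Set.Ioo (0:ℝ) 1)),
      ∀ C : ℕ, ∀ᶠ n in atTop, (C:ℝ)*n < CFAvg.S n r :=
    (MeasureTheory.ae_all_iff).mpr CFAvg.eventually_large
  filter_upwards [hall] with r hr
  rw [Filter.tendsto_atTop]
  intro b
  obtain ⟨C, hC⟩ := exists_nat_ge b
  filter_upwards [hr C, Filter.eventually_ge_atTop 1] with n hn hn1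
  have hnpos : (0:ℝ) < n := by exact_mod_cast hn1
  have hfin : (C:ℝ) ≤ (∑ i ∈ Finset.range n, (cfCoeff r i : ℝ))/n := by
    rw [le_div_iff₀ hnpos]
    have : (C:ℝ) * n < ∑ i ∈ Finset.range n, (cfCoeff r i : ℝ) := by
      simpa [CFAvg.S] using hn
    linarith
  linarith
end

section
/- In the Poincaré disc 𝔻 with metric of curvature −1, fix a point y ∈ 𝔻 and let H be a horoball with y ∉ H. Let γ₀ be the geodesic from y to the point at infinity of H, entering H at the point π_H(y). Then for any geodesic ray γ from y that enters H, with entry point γ_u, the distance along the boundary horocycle ∂H between γ_u and π_H(y) satisfies d_{∂H}(γ_u, π_H(y)) ≤ 1. -/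
lemma horoball_entry_key (a b ρ : ℝ) (ha : 0 ≤ a) (hb0 : 0 < b) (hb1 : b < 1) (hρ : 1 ≤ ρ)
    (h : a^2 + b^2 = ρ^2) : |Real.sqrt (ρ^2 - 1) - a| ≤ 1 := by
  set s := Real.sqrt (ρ^2 - 1) with hs
  have hs0 : 0 ≤ s := Real.sqrt_nonneg _
  have hs2 : s^2 = ρ^2 - 1 := Real.sq_sqrt (by nlinarith)
  rw [← sq_le_one_iff_abs_le_one]
  have hprod : (a*s)^2 = (ρ^2-b^2)*(ρ^2-1) := by
    rw [mul_pow, hs2]; nlinarith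
  have hb4 : b^2*b^2 ≤ b^2 := mul_le_of_le_one_right (sq_nonneg b) (by nlinarith)
  have key2 : 2*a*s ≥ 2*ρ^2 - 2 - b^2 := by
    rcases le_or_gt (2*ρ^2 - 2 - b^2) 0 with h1 | h1
    · nlinarith [mul_nonneg ha hs0]
    · have hsq : (2*a*s)^2 ≥ (2*ρ^2 - 2 - b^2)^2 := by nlinarith
      nlinarith [mul_nonneg ha hs0]
  nlinarith

/-- STATEMENT 18 (entry points into a horoball are close to the projection), in the
upper half-plane model: let the horoball be `H = {Im z ≥ 1}` (with ideal point `∞`),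
and let `y` be a point with `0 < Im y < 1`, so `y ∉ H`.  The geodesic `γ₀` from `y` to
`∞` is the vertical line through `y`, entering `H` at `π_H(y) = Re y + i`.  Any other
geodesic from `y` entering `H` is a Euclidean semicircle of center `c ∈ ℝ` and radius
`ρ ≥ 1` through `y` (so `|y − c| = ρ`); travelling from `y` into `H`, its entry point
into `H` is `u + i` with `u = c ± √(ρ² − 1)`, the sign being that of the side of `c`
on which `y` lies.  The distance along the horocycle `∂H = {Im z = 1}` (which agrees
with the Euclidean distance there) between the entry point and `π_H(y)` is at most 1:
`|u − Re y| ≤ 1`. -/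
theorem horoball_entry_near_projection (y : ℂ) (c ρ : ℝ)
    (hy0 : 0 < y.im) (hy1 : y.im < 1)
    (hρ : 1 ≤ ρ) (hon : ‖y - (c : ℂ)‖ = ρ) :
    |(if c ≤ y.re then c + Real.sqrt (ρ ^ 2 - 1) else c - Real.sqrt (ρ ^ 2 - 1)) - y.re|
      ≤ 1 := by
  have hcirc : (y.re - c)^2 + y.im^2 = ρ^2 := by
    have := congrArg (· ^ 2) hon
    simp only [Complex.sq_norm, Complex.normSq_apply, Complex.sub_re, Complex.sub_im,
      Complex.ofReal_re, Complex.ofReal_im] at this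
    nlinarith [this]
  split_ifs with hc
  · have := horoball_entry_key (y.re - c) y.im ρ (by linarith) hy0 hy1 hρ hcirc
    rw [show c + Real.sqrt (ρ ^ 2 - 1) - y.re = Real.sqrt (ρ^2-1) - (y.re - c) by ring]
    exact this
  · have := horoball_entry_key (c - y.re) y.im ρ (by linarith) hy0 hy1 hρ (by nlinarith)
    rw [show c - Real.sqrt (ρ ^ 2 - 1) - y.re = -(Real.sqrt (ρ^2-1) - (c - y.re)) by ring,
      abs_neg]
    exact this
end
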